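/- Let K be a compact zerodimensional Hausdorff space supporting a strictly positive Radon measure μ, and suppose f : K → 2^ω is a continuous finite-to-one map (every fiber f⁻¹({t}) is finite). Then K is separable. -/

import Mathlib

open MeasureTheory Set
open scoped ENNReal

section Aux

variable {K : Type*} [TopologicalSpace K] [CompactSpace K] [T2Space K]

/-- Selection lemma: for every nonempty closed `C ⊆ K` there is a countable set `D`
such that every open `V` disjoint from `D` misses a point of every fiber over `f '' C`
inside `C`.  (Take a Zorn-minimal closed `G ⊆ C` with `f '' G = f '' C`; it is irreducible
over its separable metrizable image, and the fibers over a countable dense subset of the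
image do the job.) -/
lemma sel_aux (f : K → (ℕ → Bool)) (hf : Continuous f)
    (hfin : ∀ t : ℕ → Bool, (f ⁻¹' {t}).Finite)
    (C : Set K) (hC : IsClosed C) (hne : C.Nonempty) :
    ∃ D : Set K, D.Countable ∧
      ∀ V : Set K, IsOpen V → V ∩ D = ∅ → ∀ t ∈ f '' C, ∃ y ∈ C \ V, f y = t := by
  classical
  set S : Set (Set K) := {G | G ⊆ C ∧ IsClosed G ∧ f '' G = f '' C} with hSdef
  have hCS : C ∈ S := ⟨subset_rfl, hC, rfl⟩
  have hch : ∀ c ⊆ S, IsChain (· ⊆ ·) c → c.Nonempty →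
      ∃ lb ∈ S, ∀ s ∈ c, lb ⊆ s := by
    intro c hcS hchain hcne
    obtain ⟨G₀, hG₀⟩ := hcne
    have hsubC : ⋂₀ c ⊆ C := (sInter_subset_of_mem hG₀).trans (hcS hG₀).1
    refine ⟨⋂₀ c, ⟨hsubC, isClosed_sInter fun G hG => (hcS hG).2.1, ?_⟩,
      fun s hs => sInter_subset_of_mem hs⟩
    refine subset_antisymm (image_mono hsubC) ?_
    rintro t ⟨xx, hxx, rfl⟩
    haveI : Nonempty ↥c := ⟨⟨G₀, hG₀⟩⟩
    set g : ↥c → Set K := fun G => ↑G ∩ f ⁻¹' {f xx} with hg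
    have hdir : Directed (· ⊇ ·) g := by
      rintro ⟨G, hG⟩ ⟨H, hH⟩
      rcases eq_or_ne G H with rfl | hne'
      · exact ⟨⟨G, hG⟩, subset_rfl, subset_rfl⟩
      · rcases hchain hG hH hne' with h | h
        · exact ⟨⟨G, hG⟩, subset_rfl, inter_subset_inter h subset_rfl⟩
        · exact ⟨⟨H, hH⟩, inter_subset_inter h subset_rfl, subset_rfl⟩
    have hn : ∀ i : ↥c, (g i).Nonempty := by
      rintro ⟨G, hG⟩
      have h1 : f xx ∈ f '' C := ⟨xx, hxx, rfl⟩
      rw [← (hcS hG).2.2] at h1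
      obtain ⟨y, hyG, hy⟩ := h1
      exact ⟨y, hyG, by simp [hy]⟩
    have hcl : ∀ i : ↥c, IsClosed (g i) := by
      rintro ⟨G, hG⟩
      exact ((hcS hG).2.1).inter (isClosed_singleton.preimage hf)
    have hcpt : ∀ i : ↥c, IsCompact (g i) := fun i => (hcl i).isCompact
    obtain ⟨y, hy⟩ := IsCompact.nonempty_iInter_of_directed_nonempty_isCompact_isClosed
      g hdir hn hcpt hcl
    refine ⟨y, ?_, ?_⟩
    · rw [mem_sInter]
      intro G hG
      exact (mem_iInter.1 hy ⟨G, hG⟩).1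
    · obtain ⟨i⟩ := ‹Nonempty ↥c›
      have := (mem_iInter.1 hy i).2
      simpa using this
  obtain ⟨G, -, hGmin⟩ := zorn_superset_nonempty S hch C hCS
  obtain ⟨hGC, hGcl, hGim⟩ := hGmin.prop
  have hGne : G.Nonempty := by
    have h1 : (f '' G).Nonempty := by rw [hGim]; exact hne.image f
    exact h1.of_image
  obtain ⟨Q₀, hQ₀c, hQ₀d⟩ := TopologicalSpace.exists_countable_dense ↥(f '' G)
  refine ⟨⋃ q ∈ Subtype.val '' Q₀, (G ∩ f ⁻¹' {q}), ?_, ?_⟩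
  · exact Countable.biUnion (hQ₀c.image _)
      fun q _ => ((hfin q).subset inter_subset_right).countable
  intro V hV hVD t ht
  have hVG : V ∩ G = ∅ := by
    rw [← not_nonempty_iff_eq_empty]
    rintro ⟨z, hzV, hzG⟩
    have hG'cl : IsClosed (G \ V) := by
      rw [diff_eq]; exact hGcl.inter (isClosed_compl_iff.2 hV)
    have him : f '' (G \ V) ≠ f '' C := by
      intro he
      have hsub : G ⊆ G \ V :=
        hGmin.2 ⟨diff_subset.trans hGC, hG'cl, he⟩ diff_subset
      exact (hsub hzG).2 hzV
    obtain ⟨t₀, ht₀C, ht₀G'⟩ : ∃ t₀ ∈ f '' C, t₀ ∉ f '' (G \ V) := by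
      by_contra hcon
      push_neg at hcon
      refine him (subset_antisymm ?_ hcon)
      rw [← hGim]
      exact image_mono diff_subset
    have hO : IsOpen (f '' (G \ V))ᶜ :=
      ((hG'cl.isCompact.image hf).isClosed).isOpen_compl
    have ht₀G : t₀ ∈ f '' G := by rw [hGim]; exact ht₀C
    obtain ⟨q, hqQ₀, hqO⟩ : ∃ q ∈ Q₀, (q : ℕ → Bool) ∉ f '' (G \ V) := by
      have hcl := hQ₀d (⟨t₀, ht₀G⟩ : ↥(f '' G))
      have hop : IsOpen ((↑) ⁻¹' (f '' (G \ V))ᶜ : Set ↥(f '' G)) :=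
        hO.preimage continuous_subtype_val
      rcases mem_closure_iff.1 hcl _ hop ht₀G' with ⟨q, hq1, hq2⟩
      exact ⟨q, hq2, hq1⟩
    obtain ⟨y₀, hy₀G, hy₀q⟩ := q.2
    have hy₀GV : y₀ ∉ G \ V := fun hy' => hqO ⟨y₀, hy', hy₀q⟩
    have hy₀V : y₀ ∈ V := by
      by_contra hv; exact hy₀GV ⟨hy₀G, hv⟩
    have hy₀D : y₀ ∈ ⋃ q ∈ Subtype.val '' Q₀, (G ∩ f ⁻¹' {q}) := by
      refine mem_biUnion ⟨q, hqQ₀, rfl⟩ ⟨hy₀G, ?_⟩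
      simp [hy₀q]
    exact (eq_empty_iff_forall_notMem.1 hVD y₀) ⟨hy₀V, hy₀D⟩
  rw [← hGim] at ht
  obtain ⟨y, hyG, hyt⟩ := ht
  refine ⟨y, ⟨hGC hyG, fun hyV => ?_⟩, hyt⟩
  exact (eq_empty_iff_forall_notMem.1 hVG y) ⟨hyV, hyG⟩

open Classical in
/-- The countable "selection" set attached to a set `C` (junk value `∅` if the selection
property is not available). -/
noncomputable def PhiD (f : K → (ℕ → Bool)) (C : Set K) : Set K :=
  if h : ∃ D : Set K, D.Countable ∧
      ∀ V : Set K, IsOpen V → V ∩ D = ∅ → ∀ t ∈ f '' C, ∃ y ∈ C \ V, f y = t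
  then h.choose else ∅

lemma PhiD_countable (f : K → (ℕ → Bool)) (C : Set K) : (PhiD f C).Countable := by
  unfold PhiD
  split_ifs with h
  · exact h.choose_spec.1
  · exact countable_empty

lemma PhiD_spec (f : K → (ℕ → Bool)) (hf : Continuous f)
    (hfin : ∀ t : ℕ → Bool, (f ⁻¹' {t}).Finite)
    (C : Set K) (hC : IsClosed C) (hne : C.Nonempty) :
    ∀ V : Set K, IsOpen V → V ∩ PhiD f C = ∅ → ∀ t ∈ f '' C, ∃ y ∈ C \ V, f y = t := by
  have h := sel_aux f hf hfin C hC hne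
  unfold PhiD
  rw [dif_pos h]
  exact h.choose_spec.2

/-- Union of selection sets over all finite intersections of `Vs i`, `i < n`. -/
noncomputable def DDf (f : K → (ℕ → Bool)) (Vs : ℕ → Set K) (n : ℕ) : Set K :=
  ⋃ (S : Finset ℕ) (_ : ∀ i ∈ S, i < n), PhiD f (⋂ i ∈ S, Vs i)

/-- Union of selection sets over all finite intersections of the `Vs i`. -/
noncomputable def DDtot (f : K → (ℕ → Bool)) (Vs : ℕ → Set K) : Set K :=
  ⋃ (S : Finset ℕ), PhiD f (⋂ i ∈ S, Vs i)

open Classical in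
/-- Greedy choice of a nonempty clopen set disjoint from `D`, of measure within a factor `2`
of the supremum (junk value `∅` if none exists). -/
noncomputable def pickW [MeasurableSpace K] (μ : Measure K) (D : Set K) : Set K :=
  if h : ∃ W : Set K, (IsClopen W ∧ W.Nonempty ∧ W ∩ D = ∅) ∧
      ∀ W' : Set K, IsClopen W' → W'.Nonempty → W' ∩ D = ∅ → μ W' ≤ 2 * μ W
  then h.choose else ∅

/-- The recursively chosen sequence of clopen sets (as a sequence of "histories"). -/
noncomputable def AF [MeasurableSpace K] (μ : Measure K) (f : K → (ℕ → Bool)) :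
    ℕ → ℕ → Set K
  | 0 => fun _ => ∅
  | n + 1 => Function.update (AF μ f n) n (pickW μ (DDf f (AF μ f n) n))

/-- The recursively chosen sequence of clopen sets. -/
noncomputable def VF [MeasurableSpace K] (μ : Measure K) (f : K → (ℕ → Bool)) (n : ℕ) :
    Set K :=
  AF μ f (n + 1) n

lemma exists_goodW [TotallyDisconnectedSpace K] [MeasurableSpace K]
    (μ : Measure K) [IsProbabilityMeasure μ]
    (hpos : ∀ U : Set K, IsOpen U → U.Nonempty → 0 < μ U)
    (D : Set K) (hnd : ¬Dense D) :
    ∃ W : Set K, (IsClopen W ∧ W.Nonempty ∧ W ∩ D = ∅) ∧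
      ∀ W' : Set K, IsClopen W' → W'.Nonempty → W' ∩ D = ∅ → μ W' ≤ 2 * μ W := by
  obtain ⟨x, hx⟩ : ∃ x, x ∉ closure D := by
    by_contra hcon
    push_neg at hcon
    exact hnd fun x => hcon x
  obtain ⟨W₀, hW₀cl, hxW₀, hW₀sub⟩ :=
    compact_exists_isClopen_in_isOpen (isClosed_closure (s := D)).isOpen_compl hx
  have hW₀D : W₀ ∩ D = ∅ := by
    rw [eq_empty_iff_forall_notMem]
    rintro y ⟨hy1, hy2⟩
    exact (hW₀sub hy1) (subset_closure hy2)
  set A : Set (Set K) := {W | IsClopen W ∧ W.Nonempty ∧ W ∩ D = ∅} with hA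
  have hW₀A : W₀ ∈ A := ⟨hW₀cl, ⟨x, hxW₀⟩, hW₀D⟩
  set s : ℝ≥0∞ := ⨆ (W : Set K) (_ : W ∈ A), μ W with hs
  have hle : ∀ W ∈ A, μ W ≤ s := fun W hW =>
    le_iSup₂ (f := fun (W : Set K) (_ : W ∈ A) => μ W) W hW
  have hs1 : s ≤ 1 := iSup₂_le fun W _ => prob_le_one
  have hs0 : s ≠ 0 := by
    intro h0
    have h1 := hle W₀ hW₀A
    rw [h0] at h1
    exact absurd h1 (hpos W₀ hW₀cl.isOpen ⟨x, hxW₀⟩).not_ge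
  have hstop : s ≠ ⊤ := ne_top_of_le_ne_top ENNReal.one_ne_top hs1
  have hhalf : s / 2 < s := ENNReal.half_lt_self hs0 hstop
  obtain ⟨W, hWA, hWgt⟩ : ∃ W ∈ A, s / 2 < μ W := by
    by_contra hcon
    push_neg at hcon
    exact absurd (iSup₂_le hcon : s ≤ s / 2) (not_le.2 hhalf)
  refine ⟨W, hWA, fun W' h1 h2 h3 => ?_⟩
  have hW' : μ W' ≤ s := hle W' ⟨h1, h2, h3⟩
  have h2s : s ≤ 2 * μ W := by
    calc s = 2 * (s / 2) := (ENNReal.mul_div_cancel' (by norm_num) (by norm_num)).symm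
    _ ≤ 2 * μ W := mul_le_mul_right hWgt.le 2
  exact hW'.trans h2s

end Aux

theorem stmt10 {K : Type*} [TopologicalSpace K] [CompactSpace K] [T2Space K]
    [TotallyDisconnectedSpace K] [MeasurableSpace K] [BorelSpace K]
    (μ : Measure K) [IsProbabilityMeasure μ] [μ.Regular]
    -- `μ` is strictly positive:
    (hpos : ∀ U : Set K, IsOpen U → U.Nonempty → 0 < μ U)
    (f : K → (ℕ → Bool)) (hf : Continuous f)
    -- `f` is finite-to-one:
    (hfin : ∀ t : ℕ → Bool, (f ⁻¹' {t}).Finite) :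
    TopologicalSpace.SeparableSpace K := by
  by_contra hsep
  have hnd : ∀ s : Set K, s.Countable → ¬Dense s := fun s hs hd => hsep ⟨⟨s, hs, hd⟩⟩
  have hDDc : ∀ (Vs : ℕ → Set K) (n : ℕ), (DDf f Vs n).Countable := fun Vs n =>
    countable_iUnion fun S => countable_iUnion fun _ => PhiD_countable f _
  have hDDtotc : ∀ Vs : ℕ → Set K, (DDtot f Vs).Countable := fun Vs =>
    countable_iUnion fun S => PhiD_countable f _
  have hex : ∀ D : Set K, D.Countable →
      ∃ W : Set K, (IsClopen W ∧ W.Nonempty ∧ W ∩ D = ∅) ∧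
        ∀ W' : Set K, IsClopen W' → W'.Nonempty → W' ∩ D = ∅ → μ W' ≤ 2 * μ W :=
    fun D hD => exists_goodW μ hpos D (hnd D hD)
  -- coherence of the recursion
  have hAco : ∀ n i, i < n → AF μ f n i = VF μ f i := by
    intro n
    induction n with
    | zero => intro i h; exact absurd h (Nat.not_lt_zero i)
    | succ n ih =>
      intro i h
      rcases Nat.lt_succ_iff_lt_or_eq.1 h with h' | rfl
      · have : AF μ f (n + 1) i = AF μ f n i := by
          show Function.update (AF μ f n) n (pickW μ (DDf f (AF μ f n) n)) i = AF μ f n i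
          exact Function.update_of_ne (Nat.ne_of_lt h') _ _
        rw [this]
        exact ih i h'
      · rfl
  have hVdef : ∀ n, VF μ f n = pickW μ (DDf f (AF μ f n) n) := by
    intro n
    show Function.update (AF μ f n) n (pickW μ (DDf f (AF μ f n) n)) n = _
    exact Function.update_self n _ (AF μ f n)
  have hDDeq : ∀ n, DDf f (AF μ f n) n = DDf f (VF μ f) n := by
    intro n
    unfold DDf
    apply iUnion_congr
    intro S
    by_cases hS : ∀ i ∈ S, i < n
    · have hinter : (⋂ i ∈ S, AF μ f n i) = ⋂ i ∈ S, VF μ f i :=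
        iInter₂_congr fun i hi => hAco n i (hS i hi)
      rw [hinter]
    · exact (iSup_neg hS).trans (iSup_neg hS).symm
  -- the properties of the chosen sequence
  have hkey : ∀ n, IsClopen (VF μ f n) ∧ (VF μ f n).Nonempty ∧
      VF μ f n ∩ DDf f (VF μ f) n = ∅ ∧
      ∀ W' : Set K, IsClopen W' → W'.Nonempty → W' ∩ DDf f (VF μ f) n = ∅ →
        μ W' ≤ 2 * μ (VF μ f n) := by
    intro n
    have he := hex (DDf f (AF μ f n) n) (hDDc _ n)
    have h1 := he.choose_spec
    have hv : VF μ f n = he.choose := by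
      rw [hVdef n]
      unfold pickW
      rw [dif_pos he]
    rw [← hDDeq n, hv]
    exact ⟨h1.1.1, h1.1.2.1, h1.1.2.2, h1.2⟩
  -- the final clopen set avoiding everything
  obtain ⟨W, ⟨hWcl, hWne, hWD⟩, -⟩ := hex (DDtot f (VF μ f)) (hDDtotc _)
  have hWDn : ∀ n, W ∩ DDf f (VF μ f) n = ∅ := by
    intro n
    apply eq_empty_of_subset_empty
    rw [← hWD]
    apply inter_subset_inter_right
    unfold DDf DDtot
    exact iUnion_subset fun S => iUnion_subset fun _ =>
      subset_iUnion (fun S => PhiD f (⋂ i ∈ S, VF μ f i)) S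
  have hWpos : 0 < μ W := hpos W hWcl.isOpen hWne
  have hlb : ∀ n, μ W ≤ 2 * μ (VF μ f n) := fun n =>
    (hkey n).2.2.2 W hWcl hWne (hWDn n)
  -- a point in infinitely many `VF n`
  set B : ℕ → Set K := fun N => ⋃ (n : ℕ) (_ : N ≤ n), VF μ f n with hB
  have hBanti : Antitone B := by
    intro a b hab
    simp only [hB]
    exact iUnion₂_subset fun k hk => subset_iUnion₂ (s := fun n (_ : a ≤ n) => VF μ f n) k (hab.trans hk)
  have hBm : ∀ N, NullMeasurableSet (B N) μ := fun N =>
    (MeasurableSet.iUnion fun n => MeasurableSet.iUnion fun _ =>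
      ((hkey n).1.isOpen).measurableSet).nullMeasurableSet
  have hBlb : ∀ N, μ W ≤ 2 * μ (B N) := by
    intro N
    refine (hlb N).trans ?_
    exact mul_le_mul_right (measure_mono (subset_iUnion₂ N le_rfl)) 2
  have hiInter := hBanti.measure_iInter hBm ⟨0, measure_ne_top μ _⟩
  have hLne : (⋂ N, B N).Nonempty := by
    apply nonempty_of_measure_ne_zero (μ := μ)
    intro h0
    rw [h0] at hiInter
    obtain ⟨N, hN⟩ : ∃ N, μ (B N) < μ W / 2 := by
      apply iInf_lt_iff.1
      rw [← hiInter]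
      exact ENNReal.div_pos hWpos.ne' ENNReal.ofNat_ne_top
    have h1 : μ W ≤ 2 * μ (B N) := hBlb N
    have h2 : 2 * μ (B N) < 2 * (μ W / 2) :=
      (ENNReal.mul_lt_mul_iff_right two_ne_zero ENNReal.ofNat_ne_top).2 hN
    rw [ENNReal.mul_div_cancel two_ne_zero ENNReal.ofNat_ne_top] at h2
    exact absurd (h1.trans_lt h2) (lt_irrefl _)
  obtain ⟨x, hx⟩ := hLne
  have hfreq : ∃ᶠ n in Filter.atTop, x ∈ VF μ f n := by
    rw [Filter.frequently_atTop]
    intro N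
    obtain ⟨n, hn, hmem⟩ := mem_iUnion₂.1 (mem_iInter.1 hx N)
    exact ⟨n, hn, hmem⟩
  obtain ⟨φ, hφmono, hφ⟩ := Filter.extraction_of_frequently_atTop hfreq
  -- the fiber points
  set SS : ℕ → Finset ℕ := fun i => (Finset.range (i + 1)).image φ with hSS
  set Ci : ℕ → Set K := fun i => ⋂ j ∈ SS i, VF μ f j with hCi
  have hxCi : ∀ i, x ∈ Ci i := by
    intro i
    apply mem_iInter₂.2
    intro j hj
    obtain ⟨k, hk, rfl⟩ := Finset.mem_image.1 hj
    exact hφ k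
  have hCicl : ∀ i, IsClopen (Ci i) := fun i =>
    isClopen_biInter_finset fun j _ => (hkey j).1
  have hCilt : ∀ i, ∀ j ∈ SS i, j < φ (i + 1) := by
    intro i j hj
    obtain ⟨k, hk, rfl⟩ := Finset.mem_image.1 hj
    exact hφmono (Finset.mem_range.1 hk)
  have hsubD : ∀ i, PhiD f (Ci i) ⊆ DDf f (VF μ f) (φ (i + 1)) := by
    intro i z hz
    unfold DDf
    exact mem_iUnion.2 ⟨SS i, mem_iUnion.2 ⟨hCilt i, hz⟩⟩
  have hdisj : ∀ i, VF μ f (φ (i + 1)) ∩ PhiD f (Ci i) = ∅ := by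
    intro i
    apply eq_empty_of_subset_empty
    calc VF μ f (φ (i + 1)) ∩ PhiD f (Ci i)
        ⊆ VF μ f (φ (i + 1)) ∩ DDf f (VF μ f) (φ (i + 1)) :=
          inter_subset_inter_right _ (hsubD i)
      _ = ∅ := (hkey (φ (i + 1))).2.2.1
  have hyex : ∀ i, ∃ y, y ∈ Ci i \ VF μ f (φ (i + 1)) ∧ f y = f x := by
    intro i
    obtain ⟨y, hy1, hy2⟩ := PhiD_spec f hf hfin (Ci i) (hCicl i).isClosed ⟨x, hxCi i⟩
      (VF μ f (φ (i + 1))) ((hkey (φ (i + 1))).1).isOpen (hdisj i) (f x) ⟨x, hxCi i, rfl⟩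
    exact ⟨y, hy1, hy2⟩
  choose y hy1 hy2 using hyex
  have hkey2 : ∀ a b, a < b → y a ≠ y b := by
    intro a b h hab
    have h1 : y a ∉ VF μ f (φ (a + 1)) := (hy1 a).2
    have h2 : y b ∈ VF μ f (φ (a + 1)) := by
      have hmem : φ (a + 1) ∈ SS b :=
        Finset.mem_image.2 ⟨a + 1, Finset.mem_range.2 (by omega), rfl⟩
      exact mem_iInter₂.1 (hy1 b).1 _ hmem
    rw [hab] at h1
    exact h1 h2
  have hyinj : Function.Injective y := by
    intro a b hab
    rcases lt_trichotomy a b with h | h | h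
    · exact absurd hab (hkey2 a b h)
    · exact h
    · exact absurd hab.symm (hkey2 b a h)
  have hsub : Set.range y ⊆ f ⁻¹' {f x} := by
    rintro z ⟨i, rfl⟩
    simp [hy2 i]
  exact ((hfin (f x)).subset hsub).not_infinite (Set.infinite_range_of_injective hyinj)
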